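/- Let T² be a Riemannian torus with systole sys ≥ C₀ > 0 and area Area(T²) ≤ S₀. Then T² contains two noncontractible closed curves, representing linearly independent (non-homologous) classes in H₁(T²;ℤ), each of length at most C = max{ 2S₀/(√3 C₀), S₀·√((2/√3)S₀ + S₀²/C₀²) / ((√3/2)C₀²) }. -/

import Mathlib

open MeasureTheory

/-- A closed curve on the torus `ℝ²/(ℤu ⊕ ℤv)` with homology class `(m,n)`:
a path `c : ℝ → ℝ²` satisfying `c 1 = c 0 + m•u + n•v`. -/
def IsTorusLoop (u v : ℝ × ℝ) (c : ℝ → ℝ × ℝ) (m n : ℤ) : Prop :=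
  Differentiable ℝ c ∧ c 1 = c 0 + ((m : ℝ) • u + (n : ℝ) • v)

/-- Length of the curve `c` on `[0,1]` in the conformally flat metric `λ² g₀`. -/
noncomputable def torusLength (lam : ℝ × ℝ → ℝ) (c : ℝ → ℝ × ℝ) : ℝ :=
  ∫ t in (0 : ℝ)..1, lam (c t) * ‖deriv c t‖

/-- The systole: infimum of lengths of noncontractible closed curves. -/
noncomputable def torusSystole (u v : ℝ × ℝ) (lam : ℝ × ℝ → ℝ) : ℝ :=
  sInf {L : ℝ | ∃ c : ℝ → ℝ × ℝ, ∃ m n : ℤ, (m, n) ≠ (0, 0) ∧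
    IsTorusLoop u v c m n ∧ L = torusLength lam c}

/-- The Riemannian area of the torus in the metric `λ² g₀`, computed over a
fundamental parallelogram with Euclidean area `|u₁v₂ − u₂v₁|`. -/
noncomputable def torusArea (u v : ℝ × ℝ) (lam : ℝ × ℝ → ℝ) : ℝ :=
  ∫ x in (0 : ℝ)..1, ∫ y in (0 : ℝ)..1,
    (lam (x • u + y • v)) ^ 2 * |u.1 * v.2 - u.2 * v.1|

/-! ### Auxiliary lemmas -/

lemma my_swap01 {F : ℝ → ℝ → ℝ} (hF : Continuous (Function.uncurry F)) :
    (∫ x in (0:ℝ)..1, ∫ y in (0:ℝ)..1, F x y) = ∫ y in (0:ℝ)..1, ∫ x in (0:ℝ)..1, F x y := by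
  have h01 : (0:ℝ) ≤ 1 := zero_le_one
  have hint : Integrable (Function.uncurry F)
      ((volume.restrict (Set.Ioc (0:ℝ) 1)).prod (volume.restrict (Set.Ioc (0:ℝ) 1))) := by
    rw [Measure.prod_restrict, ← Measure.volume_eq_prod]
    exact (hF.continuousOn.integrableOn_compact (isCompact_Icc.prod isCompact_Icc)).mono_set
      (Set.prod_mono Set.Ioc_subset_Icc_self Set.Ioc_subset_Icc_self)
  simp only [intervalIntegral.integral_of_le h01]
  exact MeasureTheory.integral_integral_swap hint

lemma my_per_shift {f : ℝ → ℝ} (hf : Function.Periodic f 1) (a : ℝ) :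
    (∫ x in (0:ℝ)..1, f (x + a)) = ∫ x in (0:ℝ)..1, f x := by
  rw [intervalIntegral.integral_comp_add_right f a]
  have := hf.intervalIntegral_add_eq a 0
  simpa [add_comm] using this

lemma my_sq_int_le {f : ℝ → ℝ} (hf : Continuous f) :
    (∫ x in (0:ℝ)..1, f x) ^ 2 ≤ ∫ x in (0:ℝ)..1, (f x) ^ 2 := by
  set c := ∫ x in (0:ℝ)..1, f x with hc
  have h1 : IntervalIntegrable (fun x => (f x) ^ 2) volume 0 1 :=
    ((hf.pow 2)).intervalIntegrable 0 1
  have h2 : IntervalIntegrable f volume 0 1 := hf.intervalIntegrable 0 1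
  have h0 : (0:ℝ) ≤ ∫ x in (0:ℝ)..1, (f x - c) ^ 2 :=
    intervalIntegral.integral_nonneg zero_le_one (fun u _ => sq_nonneg _)
  have he : (∫ x in (0:ℝ)..1, (f x - c) ^ 2)
      = (∫ x in (0:ℝ)..1, (f x)^2) - 2*c*c + c^2 := by
    have : ∀ x, (f x - c)^2 = (f x)^2 - (2*c)*(f x) + c^2 := fun x => by ring
    simp only [this]
    rw [intervalIntegral.integral_add (h1.sub (h2.const_mul (2*c))) intervalIntegrable_const,
      intervalIntegral.integral_sub h1 (h2.const_mul (2*c)),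
      intervalIntegral.integral_const_mul, intervalIntegral.integral_const]
    simp [← hc]
  nlinarith [h0, he]

lemma my_exists_le_int {f : ℝ → ℝ} (hf : Continuous f) :
    ∃ x ∈ Set.Icc (0:ℝ) 1, f x ≤ ∫ t in (0:ℝ)..1, f t := by
  obtain ⟨x₀, hx₀, hmin⟩ := isCompact_Icc.exists_isMinOn (Set.nonempty_Icc.2 zero_le_one)
    hf.continuousOn
  refine ⟨x₀, hx₀, ?_⟩
  have := intervalIntegral.integral_mono_on zero_le_one
    (_root_.intervalIntegrable_const (μ := volume) (c := f x₀))
    (hf.intervalIntegrable 0 1) (fun t ht => hmin ht)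
  simpa using this

noncomputable def Wv (u v : ℝ × ℝ) (q : ℤ × ℤ) : ℝ × ℝ := (q.1 : ℝ) • u + (q.2 : ℝ) • v
noncomputable def Nq (u v : ℝ × ℝ) (q : ℤ × ℤ) : ℝ := (Wv u v q).1 ^ 2 + (Wv u v q).2 ^ 2

lemma Wv_fst (u v : ℝ × ℝ) (q : ℤ × ℤ) : (Wv u v q).1 = (q.1:ℝ) * u.1 + (q.2:ℝ) * v.1 := by
  simp [Wv]
lemma Wv_snd (u v : ℝ × ℝ) (q : ℤ × ℤ) : (Wv u v q).2 = (q.1:ℝ) * u.2 + (q.2:ℝ) * v.2 := by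
  simp [Wv]

lemma Wv_m_det (u v : ℝ × ℝ) (q : ℤ × ℤ) :
    (q.1:ℝ) * (u.1 * v.2 - u.2 * v.1) = (Wv u v q).1 * v.2 - (Wv u v q).2 * v.1 := by
  rw [Wv_fst, Wv_snd]; ring
lemma Wv_n_det (u v : ℝ × ℝ) (q : ℤ × ℤ) :
    (q.2:ℝ) * (u.1 * v.2 - u.2 * v.1) = u.1 * (Wv u v q).2 - u.2 * (Wv u v q).1 := by
  rw [Wv_fst, Wv_snd]; ring

lemma Nq_eq_zero (u v : ℝ × ℝ) (hindep : u.1 * v.2 - u.2 * v.1 ≠ 0) {q : ℤ × ℤ}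
    (h : Nq u v q = 0) : q = 0 := by
  unfold Nq at h
  have h1 : (Wv u v q).1 = 0 := by
    have ha : (Wv u v q).1 ^ 2 = 0 := by
      nlinarith [sq_nonneg (Wv u v q).1, sq_nonneg (Wv u v q).2, h]
    exact pow_eq_zero_iff two_ne_zero |>.mp ha
  have h2 : (Wv u v q).2 = 0 := by
    have ha : (Wv u v q).2 ^ 2 = 0 := by
      nlinarith [sq_nonneg (Wv u v q).1, sq_nonneg (Wv u v q).2, h]
    exact pow_eq_zero_iff two_ne_zero |>.mp ha
  have hm : (q.1:ℝ) = 0 := by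
    have := Wv_m_det u v q; rw [h1, h2] at this
    have : (q.1:ℝ) * (u.1 * v.2 - u.2 * v.1) = 0 := by linarith [this]
    exact (mul_eq_zero.1 this).resolve_right hindep
  have hn : (q.2:ℝ) = 0 := by
    have := Wv_n_det u v q; rw [h1, h2] at this
    have : (q.2:ℝ) * (u.1 * v.2 - u.2 * v.1) = 0 := by linarith [this]
    exact (mul_eq_zero.1 this).resolve_right hindep
  have : q.1 = 0 := by exact_mod_cast hm
  have : q.2 = 0 := by exact_mod_cast hn
  ext <;> simp_all

lemma Nq_pos (u v : ℝ × ℝ) (hindep : u.1 * v.2 - u.2 * v.1 ≠ 0) {q : ℤ × ℤ} (hq : q ≠ 0) :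
    0 < Nq u v q := by
  have h0 : 0 ≤ Nq u v q := by unfold Nq; positivity
  exact h0.lt_of_ne' (fun h => hq (Nq_eq_zero u v hindep h))

lemma int_abs_le_sq_add_one (m : ℤ) : |m| ≤ m ^ 2 + 1 := by
  nlinarith [sq_nonneg (|m| - 1), sq_abs m, sq_nonneg m]

lemma lattice_min (u v : ℝ × ℝ) (hindep : u.1 * v.2 - u.2 * v.1 ≠ 0) :
    ∃ q : ℤ × ℤ, q ≠ 0 ∧ ∀ r : ℤ × ℤ, r ≠ 0 → Nq u v q ≤ Nq u v r := by
  set d := u.1 * v.2 - u.2 * v.1 with hd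
  set R := Nq u v (1, 0) with hR
  set C1 : ℝ := R * (v.1 ^ 2 + v.2 ^ 2) / d ^ 2 with hC1
  set C2 : ℝ := R * (u.1 ^ 2 + u.2 ^ 2) / d ^ 2 with hC2
  set M : ℤ := max (⌈C1⌉ + 1) (⌈C2⌉ + 1) with hM
  set S : Set (ℤ × ℤ) := {q | q ≠ 0 ∧ Nq u v q ≤ R} with hS
  have hd2 : 0 < d ^ 2 := by positivity
  have hbound : ∀ q ∈ S, q ∈ (Finset.Icc (-M) M ×ˢ Finset.Icc (-M) M : Finset (ℤ × ℤ)) := by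
    rintro ⟨m, n⟩ ⟨-, hle⟩
    have key1 : ((m:ℝ) * d) ^ 2 ≤ R * (v.1 ^ 2 + v.2 ^ 2) := by
      rw [Wv_m_det u v (m, n)]
      have hcs : ((Wv u v (m,n)).1 * v.2 - (Wv u v (m,n)).2 * v.1) ^ 2
          ≤ ((Wv u v (m,n)).1 ^ 2 + (Wv u v (m,n)).2 ^ 2) * (v.1 ^ 2 + v.2 ^ 2) := by
        nlinarith [sq_nonneg ((Wv u v (m,n)).1 * v.1 + (Wv u v (m,n)).2 * v.2)]
      refine hcs.trans ?_
      have : (v.1 ^ 2 + v.2 ^ 2) ≥ 0 := by positivity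
      exact mul_le_mul_of_nonneg_right hle this
    have key2 : ((n:ℝ) * d) ^ 2 ≤ R * (u.1 ^ 2 + u.2 ^ 2) := by
      rw [Wv_n_det u v (m, n)]
      have hcs : (u.1 * (Wv u v (m,n)).2 - u.2 * (Wv u v (m,n)).1) ^ 2
          ≤ ((Wv u v (m,n)).1 ^ 2 + (Wv u v (m,n)).2 ^ 2) * (u.1 ^ 2 + u.2 ^ 2) := by
        nlinarith [sq_nonneg (u.1 * (Wv u v (m,n)).1 + u.2 * (Wv u v (m,n)).2)]
      refine hcs.trans ?_
      exact mul_le_mul_of_nonneg_right hle (by positivity)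
    have hm1 : ((m:ℝ)) ^ 2 ≤ C1 := by
      rw [hC1, le_div_iff₀ hd2]; nlinarith [key1]
    have hn1 : ((n:ℝ)) ^ 2 ≤ C2 := by
      rw [hC2, le_div_iff₀ hd2]; nlinarith [key2]
    have hmZ : (m ^ 2 : ℤ) ≤ ⌈C1⌉ := by
      have : ((m ^ 2 : ℤ) : ℝ) ≤ (⌈C1⌉ : ℝ) := by push_cast; exact hm1.trans (Int.le_ceil C1)
      exact_mod_cast this
    have hnZ : (n ^ 2 : ℤ) ≤ ⌈C2⌉ := by
      have : ((n ^ 2 : ℤ) : ℝ) ≤ (⌈C2⌉ : ℝ) := by push_cast; exact hn1.trans (Int.le_ceil C2)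
      exact_mod_cast this
    have hm2 : |m| ≤ M := le_trans (int_abs_le_sq_add_one m)
      (le_trans (by omega) (le_max_left _ _))
    have hn2 : |n| ≤ M := le_trans (int_abs_le_sq_add_one n)
      (le_trans (by omega) (le_max_right _ _))
    rw [abs_le] at hm2 hn2
    simp only [Finset.mem_product, Finset.mem_Icc]
    exact ⟨hm2, hn2⟩
  have hfin : S.Finite :=
    Set.Finite.subset (Finset.Icc (-M) M ×ˢ Finset.Icc (-M) M).finite_toSet hbound
  have hne : S.Nonempty := ⟨(1, 0), ⟨by decide, le_refl R⟩⟩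
  obtain ⟨q₀, hq₀S, hq₀min⟩ := Set.exists_min_image S (fun q => Nq u v q) hfin hne
  refine ⟨q₀, hq₀S.1, fun r hr => ?_⟩
  by_cases h : Nq u v r ≤ R
  · exact hq₀min r ⟨hr, h⟩
  · exact le_trans hq₀S.2 (le_of_not_ge h)

lemma exists_short_line (u v : ℝ × ℝ) (lam : ℝ × ℝ → ℝ) (hpos : ∀ p, 0 < lam p)
    (hcont : Continuous lam)
    (hper_u : ∀ p, lam (p + u) = lam p) (hper_v : ∀ p, lam (p + v) = lam p) (m n : ℤ) :
    ∃ c : ℝ → ℝ × ℝ, IsTorusLoop u v c m n ∧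
      torusLength lam c ≤ Real.sqrt (Nq u v (m, n)) *
        (∫ x in (0:ℝ)..1, ∫ y in (0:ℝ)..1, lam (x • u + y • v)) := by
  set F : ℝ → ℝ → ℝ := fun a b => lam (a • u + b • v) with hFdef
  have hFc : Continuous (Function.uncurry F) := by
    apply hcont.comp
    exact (continuous_fst.smul continuous_const).add (continuous_snd.smul continuous_const)
  have hFa : ∀ b, Function.Periodic (fun a => F a b) 1 := by
    intro b a
    show lam ((a + 1) • u + b • v) = lam (a • u + b • v)
    have he : (a + 1) • u + b • v = (a • u + b • v) + u := by module
    rw [he, hper_u]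
  have hFb : ∀ a, Function.Periodic (F a) 1 := by
    intro a b
    show lam (a • u + (b + 1) • v) = lam (a • u + b • v)
    have he : a • u + (b + 1) • v = (a • u + b • v) + v := by module
    rw [he, hper_v]
  set H : ℝ → ℝ := fun a => ∫ b in (0:ℝ)..1, F a b with hHdef
  have hHc : Continuous H :=
    intervalIntegral.continuous_parametric_intervalIntegral_of_continuous' (μ := volume) hFc 0 1
  have hHper : Function.Periodic H 1 := fun a =>
    intervalIntegral.integral_congr (fun b _ => hFa b a)
  set I : ℝ := ∫ a in (0:ℝ)..1, H a with hIdef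
  set w : ℝ × ℝ := (m : ℝ) • u + (n : ℝ) • v with hwdef
  have key : ∀ x y t : ℝ, lam ((x • u + y • v) + t • w) = F (x + t * (m:ℝ)) (y + t * (n:ℝ)) := by
    intro x y t
    show lam _ = lam _
    congr 1
    rw [hwdef]
    module
  set L : ℝ → ℝ → ℝ := fun x y => ∫ t in (0:ℝ)..1, F (x + t * (m:ℝ)) (y + t * (n:ℝ)) with hLdef
  have hLc : Continuous (Function.uncurry L) := by
    have : Continuous (Function.uncurry
        (fun (p : ℝ × ℝ) (t : ℝ) => F (p.1 + t * (m:ℝ)) (p.2 + t * (n:ℝ)))) :=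
      hFc.comp (show Continuous fun z : (ℝ × ℝ) × ℝ =>
        ((z.1.1 + z.2 * (m:ℝ), z.1.2 + z.2 * (n:ℝ)) : ℝ × ℝ) by fun_prop)
    exact intervalIntegral.continuous_parametric_intervalIntegral_of_continuous'
      (μ := volume) this 0 1
  have stepA : ∀ x, (∫ y in (0:ℝ)..1, L x y) = ∫ t in (0:ℝ)..1, H (x + t * (m:ℝ)) := by
    intro x
    have hswap := my_swap01 (F := fun y t => F (x + t * (m:ℝ)) (y + t * (n:ℝ)))
      (hFc.comp (show Continuous fun z : ℝ × ℝ =>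
        ((x + z.2 * (m:ℝ), z.1 + z.2 * (n:ℝ)) : ℝ × ℝ) by fun_prop))
    rw [hLdef]
    simp only []
    rw [hswap]
    refine intervalIntegral.integral_congr (fun t _ => ?_)
    exact my_per_shift (hFb (x + t * (m:ℝ))) (t * (n:ℝ))
  have stepB : (∫ x in (0:ℝ)..1, ∫ y in (0:ℝ)..1, L x y) = I := by
    have h1 : (∫ x in (0:ℝ)..1, ∫ y in (0:ℝ)..1, L x y)
        = ∫ x in (0:ℝ)..1, ∫ t in (0:ℝ)..1, H (x + t * (m:ℝ)) :=
      intervalIntegral.integral_congr (fun x _ => stepA x)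
    rw [h1, my_swap01 (F := fun x t => H (x + t * (m:ℝ)))
      (hHc.comp (show Continuous fun z : ℝ × ℝ => z.1 + z.2 * (m:ℝ) by fun_prop))]
    have h2 : (∫ t in (0:ℝ)..1, ∫ x in (0:ℝ)..1, H (x + t * (m:ℝ)))
        = ∫ t in (0:ℝ)..1, I :=
      intervalIntegral.integral_congr (fun t _ => my_per_shift hHper (t * (m:ℝ)))
    rw [h2]; simp
  have hAc : Continuous (fun x => ∫ y in (0:ℝ)..1, L x y) :=
    intervalIntegral.continuous_parametric_intervalIntegral_of_continuous' (μ := volume) hLc 0 1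
  obtain ⟨x₀, -, hx₀⟩ := my_exists_le_int hAc
  rw [stepB] at hx₀
  have hLx₀c : Continuous (L x₀) := by
    have : Continuous (fun y => Function.uncurry L (x₀, y)) :=
      hLc.comp (continuous_const.prodMk continuous_id)
    exact this
  obtain ⟨y₀, -, hy₀⟩ := my_exists_le_int hLx₀c
  have hLI : L x₀ y₀ ≤ I := hy₀.trans hx₀
  set p : ℝ × ℝ := x₀ • u + y₀ • v with hpdef
  set c : ℝ → ℝ × ℝ := fun t => p + t • w with hcdef
  have hderiv : ∀ t, deriv c t = w := by
    intro t
    have : HasDerivAt c w t := by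
      have h1 : HasDerivAt (fun s : ℝ => s • w) ((1:ℝ) • w) t := (hasDerivAt_id t).smul_const w
      rw [one_smul] at h1; exact h1.const_add p
    exact this.deriv
  have hdiff : Differentiable ℝ c := by
    intro t
    have : HasDerivAt c w t := by
      have h1 : HasDerivAt (fun s : ℝ => s • w) ((1:ℝ) • w) t := (hasDerivAt_id t).smul_const w
      rw [one_smul] at h1; exact h1.const_add p
    exact this.differentiableAt
  have hloop : IsTorusLoop u v c m n := by
    refine ⟨hdiff, ?_⟩
    simp [hcdef, hwdef]
  refine ⟨c, hloop, ?_⟩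
  have hlen : torusLength lam c = L x₀ y₀ * ‖w‖ := by
    unfold torusLength
    have : ∀ t : ℝ, lam (c t) * ‖deriv c t‖ = F (x₀ + t * (m:ℝ)) (y₀ + t * (n:ℝ)) * ‖w‖ := by
      intro t
      rw [hderiv t]
      congr 1
      exact key x₀ y₀ t
    simp only [this]
    rw [intervalIntegral.integral_mul_const]
  rw [hlen]
  have hwN : ‖w‖ ≤ Real.sqrt (Nq u v (m, n)) := by
    have hNq : Nq u v (m, n) = w.1 ^ 2 + w.2 ^ 2 := rfl
    rw [hNq, Prod.norm_def]
    have h1 : ‖w.1‖ ≤ Real.sqrt (w.1 ^ 2 + w.2 ^ 2) := by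
      rw [Real.norm_eq_abs, ← Real.sqrt_sq_eq_abs]
      exact Real.sqrt_le_sqrt (by nlinarith [sq_nonneg w.2])
    have h2 : ‖w.2‖ ≤ Real.sqrt (w.1 ^ 2 + w.2 ^ 2) := by
      rw [Real.norm_eq_abs, ← Real.sqrt_sq_eq_abs]
      exact Real.sqrt_le_sqrt (by nlinarith [sq_nonneg w.1])
    exact max_le h1 h2
  have hL0 : 0 ≤ L x₀ y₀ :=
    intervalIntegral.integral_nonneg zero_le_one (fun t _ => (hpos _).le)
  have hI0 : 0 ≤ I := by
    refine intervalIntegral.integral_nonneg zero_le_one (fun a _ => ?_)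
    exact intervalIntegral.integral_nonneg zero_le_one (fun b _ => (hpos _).le)
  calc L x₀ y₀ * ‖w‖ ≤ I * ‖w‖ := mul_le_mul_of_nonneg_right hLI (norm_nonneg w)
    _ ≤ I * Real.sqrt (Nq u v (m, n)) := mul_le_mul_of_nonneg_left hwN hI0
    _ = Real.sqrt (Nq u v (m, n)) * I := mul_comm _ _

set_option maxHeartbeats 1000000 in
lemma I_sq_le_Q (u v : ℝ × ℝ) (lam : ℝ × ℝ → ℝ) (hcont : Continuous lam) :
    (∫ x in (0:ℝ)..1, ∫ y in (0:ℝ)..1, lam (x • u + y • v)) ^ 2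
      ≤ ∫ x in (0:ℝ)..1, ∫ y in (0:ℝ)..1, (lam (x • u + y • v)) ^ 2 := by
  set F : ℝ → ℝ → ℝ := fun a b => lam (a • u + b • v) with hFdef
  have hFc : Continuous (Function.uncurry F) := by
    apply hcont.comp
    exact (continuous_fst.smul continuous_const).add (continuous_snd.smul continuous_const)
  set H : ℝ → ℝ := fun a => ∫ b in (0:ℝ)..1, F a b with hHdef
  have hHc : Continuous H :=
    intervalIntegral.continuous_parametric_intervalIntegral_of_continuous' (μ := volume) hFc 0 1
  have h1 : (∫ a in (0:ℝ)..1, H a) ^ 2 ≤ ∫ a in (0:ℝ)..1, (H a) ^ 2 := my_sq_int_le hHc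
  have hQc : Continuous (fun a => ∫ b in (0:ℝ)..1, (F a b) ^ 2) :=
    intervalIntegral.continuous_parametric_intervalIntegral_of_continuous' (μ := volume)
      (show Continuous (Function.uncurry (fun a b => (F a b) ^ 2)) from hFc.pow 2) 0 1
  have h2 : ∀ a, (H a) ^ 2 ≤ ∫ b in (0:ℝ)..1, (F a b) ^ 2 := by
    intro a
    exact my_sq_int_le (hFc.comp (continuous_const.prodMk continuous_id))
  have h3 : (∫ a in (0:ℝ)..1, (H a) ^ 2) ≤ ∫ a in (0:ℝ)..1, ∫ b in (0:ℝ)..1, (F a b) ^ 2 :=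
    intervalIntegral.integral_mono_on zero_le_one ((hHc.pow 2).intervalIntegrable 0 1)
      (hQc.intervalIntegrable 0 1) (fun a _ => h2 a)
  exact h1.trans h3

set_option maxHeartbeats 1000000 in
/-- A Riemannian torus (conformally flat, by uniformization) with systole `≥ C₀ > 0`
and area `≤ S₀` contains two noncontractible closed curves representing linearly
independent (non-homologous) classes in `H₁(T²;ℤ) ≅ ℤ²`, each of length at most
`C = max{ 2S₀/(√3 C₀), S₀·√((2/√3)S₀ + S₀²/C₀²) / ((√3/2)C₀²) }`. -/
theorem two_short_nonhomologous_curves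
    (u v : ℝ × ℝ) (hindep : u.1 * v.2 - u.2 * v.1 ≠ 0)
    (lam : ℝ × ℝ → ℝ) (hpos : ∀ p, 0 < lam p) (hcont : Continuous lam)
    (hper_u : ∀ p, lam (p + u) = lam p) (hper_v : ∀ p, lam (p + v) = lam p)
    (C₀ S₀ : ℝ) (hC₀ : 0 < C₀)
    (hsys : C₀ ≤ torusSystole u v lam)
    (harea : torusArea u v lam ≤ S₀) :
    ∃ (c₁ c₂ : ℝ → ℝ × ℝ) (m₁ n₁ m₂ n₂ : ℤ),
      IsTorusLoop u v c₁ m₁ n₁ ∧ IsTorusLoop u v c₂ m₂ n₂ ∧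
      (m₁, n₁) ≠ (0, 0) ∧ (m₂, n₂) ≠ (0, 0) ∧
      m₁ * n₂ - m₂ * n₁ ≠ 0 ∧
      torusLength lam c₁ ≤
        max (2 * S₀ / (Real.sqrt 3 * C₀))
          (S₀ * Real.sqrt (2 / Real.sqrt 3 * S₀ + S₀ ^ 2 / C₀ ^ 2) /
            (Real.sqrt 3 / 2 * C₀ ^ 2)) ∧
      torusLength lam c₂ ≤
        max (2 * S₀ / (Real.sqrt 3 * C₀))
          (S₀ * Real.sqrt (2 / Real.sqrt 3 * S₀ + S₀ ^ 2 / C₀ ^ 2) /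
            (Real.sqrt 3 / 2 * C₀ ^ 2)) := by
  -- notation
  set d : ℝ := u.1 * v.2 - u.2 * v.1 with hddef
  set D : ℝ := |d| with hDdef
  have hD : 0 < D := abs_pos.mpr hindep
  set s3 : ℝ := Real.sqrt 3 with hs3def
  have hs3pos : 0 < s3 := Real.sqrt_pos.mpr (by norm_num)
  have hs3sq : s3 ^ 2 = 3 := Real.sq_sqrt (by norm_num)
  -- shortest lattice vector
  obtain ⟨q₁, hq₁0, hq₁min⟩ := lattice_min u v hindep
  -- q₁ is primitive
  have hgcd : Int.gcd q₁.1 q₁.2 = 1 := by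
    by_contra hne
    have hg0 : Int.gcd q₁.1 q₁.2 ≠ 0 := by
      intro h
      rw [Int.gcd_eq_zero_iff] at h
      exact hq₁0 (Prod.ext h.1 h.2)
    have hg2 : 2 ≤ Int.gcd q₁.1 q₁.2 := by omega
    obtain ⟨m', hm'⟩ : ((Int.gcd q₁.1 q₁.2 : ℤ)) ∣ q₁.1 := Int.gcd_dvd_left _ _
    obtain ⟨n', hn'⟩ : ((Int.gcd q₁.1 q₁.2 : ℤ)) ∣ q₁.2 := Int.gcd_dvd_right _ _
    obtain ⟨g, hgdef⟩ : ∃ g : ℤ, (Int.gcd q₁.1 q₁.2 : ℤ) = g := ⟨_, rfl⟩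
    rw [hgdef] at hm' hn'
    have hg2' : (2:ℝ) ≤ (g:ℝ) := by
      rw [← hgdef]; exact_mod_cast hg2
    have hr0 : ((m', n') : ℤ × ℤ) ≠ 0 := by
      intro h
      have h1 : m' = 0 := by simpa using congrArg Prod.fst h
      have h2 : n' = 0 := by simpa using congrArg Prod.snd h
      apply hq₁0
      rw [Prod.ext_iff]
      refine ⟨?_, ?_⟩
      · simp [hm', h1]
      · simp [hn', h2]
    have hNqe : Nq u v q₁ = ((g : ℤ) : ℝ) ^ 2 * Nq u v (m', n') := by
      unfold Nq
      simp only [Wv_fst, Wv_snd]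
      rw [hm', hn']
      push_cast
      ring
    have hle := hq₁min (m', n') hr0
    have hpos' := Nq_pos u v hindep hr0
    have hg4 : (4:ℝ) ≤ ((g:ℤ):ℝ) ^ 2 := by nlinarith [hg2']
    have hkey : ((g:ℤ):ℝ) ^ 2 * Nq u v (m', n') ≤ Nq u v (m', n') := by
      rw [← hNqe]; exact hle
    nlinarith [mul_le_mul_of_nonneg_right hg4 hpos'.le, hkey, hpos']
  -- Bezout: complete to a basis
  have hbez : (1:ℤ) = q₁.1 * Int.gcdA q₁.1 q₁.2 + q₁.2 * Int.gcdB q₁.1 q₁.2 := by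
    have := Int.gcd_eq_gcd_ab q₁.1 q₁.2
    rw [hgcd] at this
    exact_mod_cast this
  set m₂0 : ℤ := -(Int.gcdB q₁.1 q₁.2) with hm20
  set n₂0 : ℤ := Int.gcdA q₁.1 q₁.2 with hn20
  -- reduce the second vector
  set w1 : ℝ × ℝ := Wv u v q₁ with hw1def
  set L : ℝ := Nq u v q₁ with hLdef
  have hLw : L = w1.1 ^ 2 + w1.2 ^ 2 := rfl
  have hL0 : 0 < L := Nq_pos u v hindep hq₁0
  set r0 : ℝ := w1.1 * (Wv u v (m₂0, n₂0)).1 + w1.2 * (Wv u v (m₂0, n₂0)).2 with hr0def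
  set k : ℤ := round (r0 / L) with hkdef
  set q₂ : ℤ × ℤ := (m₂0 - k * q₁.1, n₂0 - k * q₁.2) with hq₂def
  have hdetI : q₁.1 * q₂.2 - q₂.1 * q₁.2 = 1 := by
    simp only [hq₂def, hm20, hn20]
    linear_combination (-1 : ℤ) * hbez
  have hq₂0 : q₂ ≠ 0 := by
    intro h
    rw [h] at hdetI
    simp at hdetI
  set w2 : ℝ × ℝ := Wv u v q₂ with hw2def
  set M : ℝ := Nq u v q₂ with hMdef
  have hMw : M = w2.1 ^ 2 + w2.2 ^ 2 := rfl
  have hM0 : 0 < M := Nq_pos u v hindep hq₂0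
  have hLM' : L ≤ M := hq₁min q₂ hq₂0
  set ip : ℝ := w1.1 * w2.1 + w1.2 * w2.2 with hipdef
  have hipeq : ip = r0 - (k:ℝ) * L := by
    rw [hipdef, hr0def, hLw, hw1def, hw2def]
    simp only [Wv_fst, Wv_snd, hq₂def]
    push_cast
    ring
  have hip2 : |ip| ≤ L / 2 := by
    have h1 : |r0 / L - (k:ℝ)| ≤ 1/2 := abs_sub_round (r0 / L)
    have h2 : ip = (r0 / L - (k:ℝ)) * L := by
      rw [hipeq]; field_simp
    rw [h2, abs_mul, abs_of_pos hL0]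
    calc |r0 / L - (k:ℝ)| * L ≤ (1/2) * L := mul_le_mul_of_nonneg_right h1 hL0.le
      _ = L / 2 := by ring
  have hdet12 : w1.1 * w2.2 - w1.2 * w2.1 = d := by
    have h1 : w1.1 * w2.2 - w1.2 * w2.1 = ((q₁.1 * q₂.2 - q₂.1 * q₁.2 : ℤ) : ℝ) * d := by
      rw [hw1def, hw2def]
      simp only [Wv_fst, Wv_snd]
      push_cast
      ring
    rw [h1, hdetI]
    push_cast
    ring
  have hLag : d ^ 2 + ip ^ 2 = L * M := by
    rw [← hdet12, hipdef, hLw, hMw]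
    ring
  have hd2D : d ^ 2 = D ^ 2 := (sq_abs d).symm
  clear_value ip r0 k w1 w2 q₂ M L d D s3
  have hLMle : L * M ≤ D ^ 2 + L ^ 2 / 4 := by
    have h1 : ip ^ 2 ≤ (L / 2) ^ 2 := by
      rw [← sq_abs ip]
      exact pow_le_pow_left₀ (abs_nonneg ip) hip2 2
    linarith [hLag, h1, hd2D, sq_nonneg (L/2)]
  -- Hermite-type bound
  have hHermite : s3 * L ≤ 2 * D := by
    have h0 : L * L ≤ L * M := mul_le_mul_of_nonneg_left hLM' hL0.le
    have h1 : 3 * L ^ 2 ≤ 4 * D ^ 2 := by nlinarith [h0, hLMle]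
    by_contra hcon
    push_neg at hcon
    have hq : (2 * D) ^ 2 < (s3 * L) ^ 2 :=
      pow_lt_pow_left₀ hcon (by positivity) two_ne_zero
    have hq2 : 4 * D ^ 2 < s3 ^ 2 * L ^ 2 := by nlinarith [hq]
    rw [hs3sq] at hq2
    linarith [h1, hq2]
  -- analytic quantities
  set I : ℝ := ∫ x in (0:ℝ)..1, ∫ y in (0:ℝ)..1, lam (x • u + y • v) with hIdef
  set Q : ℝ := ∫ x in (0:ℝ)..1, ∫ y in (0:ℝ)..1, (lam (x • u + y • v)) ^ 2 with hQdef
  have hI0 : 0 ≤ I := by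
    refine intervalIntegral.integral_nonneg zero_le_one (fun a _ => ?_)
    exact intervalIntegral.integral_nonneg zero_le_one (fun b _ => (hpos _).le)
  have hCS : I ^ 2 ≤ Q := I_sq_le_Q u v lam hcont
  have hAeq : torusArea u v lam = Q * D := by
    unfold torusArea
    rw [hQdef, hDdef, hddef]
    simp only [← intervalIntegral.integral_mul_const]
  have hQD : Q * D ≤ S₀ := by rw [← hAeq]; exact harea
  clear_value I Q
  -- the two loops
  obtain ⟨c₁, hloop₁, hlen₁⟩ := exists_short_line u v lam hpos hcont hper_u hper_v q₁.1 q₁.2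
  obtain ⟨c₂, hloop₂, hlen₂⟩ := exists_short_line u v lam hpos hcont hper_u hper_v q₂.1 q₂.2
  have heta₁ : Nq u v (q₁.1, q₁.2) = L := by rw [hLdef]
  have heta₂ : Nq u v (q₂.1, q₂.2) = M := by rw [hMdef]
  rw [heta₁, ← hIdef] at hlen₁
  rw [heta₂, ← hIdef] at hlen₂
  -- systole lower bound
  have hbdd : BddBelow {Len : ℝ | ∃ c : ℝ → ℝ × ℝ, ∃ m n : ℤ, (m, n) ≠ (0, 0) ∧
      IsTorusLoop u v c m n ∧ Len = torusLength lam c} := by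
    refine ⟨0, fun Len hLen => ?_⟩
    obtain ⟨c, m, n, -, -, rfl⟩ := hLen
    exact intervalIntegral.integral_nonneg zero_le_one
      (fun t _ => mul_nonneg (hpos _).le (norm_nonneg _))
  have hne₁ : ((q₁.1, q₁.2) : ℤ × ℤ) ≠ (0, 0) := by
    rw [Prod.mk_zero_zero]
    simpa using hq₁0
  have hne₂ : ((q₂.1, q₂.2) : ℤ × ℤ) ≠ (0, 0) := by
    rw [Prod.mk_zero_zero]
    simpa using hq₂0
  have hsys₁ : C₀ ≤ torusLength lam c₁ := by
    refine hsys.trans (csInf_le hbdd ?_)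
    exact ⟨c₁, q₁.1, q₁.2, hne₁, hloop₁, rfl⟩
  -- key quantities
  set sL : ℝ := Real.sqrt L with hsLdef
  set sM : ℝ := Real.sqrt M with hsMdef
  have hsL2 : sL ^ 2 = L := Real.sq_sqrt hL0.le
  have hsM2 : sM ^ 2 = M := Real.sq_sqrt hM0.le
  have hsL0 : 0 ≤ sL := Real.sqrt_nonneg _
  have hsM0 : 0 ≤ sM := Real.sqrt_nonneg _
  have hC0X : C₀ ≤ sL * I := hsys₁.trans hlen₁
  have hX0 : 0 ≤ sL * I := mul_nonneg hsL0 hI0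
  have hC0sqX : C₀ ^ 2 ≤ L * I ^ 2 := by
    calc C₀ ^ 2 ≤ (sL * I) ^ 2 := pow_le_pow_left₀ hC₀.le hC0X 2
      _ = L * I ^ 2 := by rw [mul_pow, hsL2]
  have hDI2 : D * I ^ 2 ≤ S₀ := by
    calc D * I ^ 2 ≤ D * Q := mul_le_mul_of_nonneg_left hCS hD.le
      _ = Q * D := mul_comm _ _
      _ ≤ S₀ := hQD
  have hLI2 : L * I ^ 2 ≤ 2 / s3 * S₀ := by
    have h5 : s3 * (L * I ^ 2) ≤ 2 * S₀ := by
      calc s3 * (L * I ^ 2) = (s3 * L) * I ^ 2 := by ring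
        _ ≤ (2 * D) * I ^ 2 := mul_le_mul_of_nonneg_right hHermite (sq_nonneg I)
        _ = 2 * (D * I ^ 2) := by ring
        _ ≤ 2 * S₀ := by linarith [hDI2]
    rw [div_mul_eq_mul_div, le_div_iff₀ hs3pos]
    linarith [h5]
  have hC0sq : C₀ ^ 2 ≤ 2 / s3 * S₀ := hC0sqX.trans hLI2
  have hS0 : 0 < S₀ := by
    by_contra hcon
    push_neg at hcon
    have h2 : 2 / s3 * S₀ ≤ 0 := mul_nonpos_of_nonneg_of_nonpos (by positivity) hcon
    linarith [hC0sq, pow_pos hC₀ 2]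
  -- first curve bound
  have hbound₁ : sL * I ≤ 2 * S₀ / (s3 * C₀) := by
    rw [le_div_iff₀ (by positivity)]
    have h5 : s3 * (L * I ^ 2) ≤ 2 * S₀ := by
      calc s3 * (L * I ^ 2) = (s3 * L) * I ^ 2 := by ring
        _ ≤ (2 * D) * I ^ 2 := mul_le_mul_of_nonneg_right hHermite (sq_nonneg I)
        _ = 2 * (D * I ^ 2) := by ring
        _ ≤ 2 * S₀ := by linarith [hDI2]
    calc sL * I * (s3 * C₀) = s3 * (C₀ * (sL * I)) := by ring
      _ ≤ s3 * ((sL * I) * (sL * I)) :=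
          mul_le_mul_of_nonneg_left (mul_le_mul_of_nonneg_right hC0X hX0) hs3pos.le
      _ = s3 * (L * I ^ 2) := by rw [← hsL2]; ring
      _ ≤ 2 * S₀ := h5
  -- second curve bound
  have hC2pos : (0:ℝ) < C₀ ^ 2 := by positivity
  have he2 : D ^ 2 * I ^ 2 * C₀ ^ 2 ≤ S₀ ^ 2 * L := by
    have hsq : (D * I ^ 2) ^ 2 ≤ S₀ ^ 2 := pow_le_pow_left₀ (by positivity) hDI2 2
    have h6 : D ^ 2 * I ^ 2 * C₀ ^ 2 ≤ D ^ 2 * I ^ 2 * (L * I ^ 2) :=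
      mul_le_mul_of_nonneg_left hC0sqX (by positivity)
    have h7 : D ^ 2 * I ^ 2 * (L * I ^ 2) = L * (D * I ^ 2) ^ 2 := by ring
    have h8 : L * (D * I ^ 2) ^ 2 ≤ L * S₀ ^ 2 := mul_le_mul_of_nonneg_left hsq hL0.le
    calc D ^ 2 * I ^ 2 * C₀ ^ 2 ≤ D ^ 2 * I ^ 2 * (L * I ^ 2) := h6
      _ = L * (D * I ^ 2) ^ 2 := by ring
      _ ≤ L * S₀ ^ 2 := h8
      _ = S₀ ^ 2 * L := by ring
  have hMIC : M * (I ^ 2 * C₀ ^ 2) ≤ S₀ ^ 2 + (2 / s3 * S₀) * C₀ ^ 2 := by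
    have hk1 : L * M * (I ^ 2 * C₀ ^ 2) ≤ (D ^ 2 + L ^ 2 / 4) * (I ^ 2 * C₀ ^ 2) :=
      mul_le_mul_of_nonneg_right hLMle (by positivity)
    have hk2 : (L * C₀ ^ 2 / 4) * (L * I ^ 2) ≤ (L * C₀ ^ 2 / 4) * (2 / s3 * S₀) :=
      mul_le_mul_of_nonneg_left hLI2 (by positivity)
    have hk3 : (0:ℝ) ≤ L * C₀ ^ 2 * (2 / s3 * S₀) := by positivity
    have hgoal : L * (M * (I ^ 2 * C₀ ^ 2)) ≤ L * (S₀ ^ 2 + (2 / s3 * S₀) * C₀ ^ 2) := by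
      have hr1 : L * M * (I ^ 2 * C₀ ^ 2) = L * (M * (I ^ 2 * C₀ ^ 2)) := by ring
      have hr2 : (D ^ 2 + L ^ 2 / 4) * (I ^ 2 * C₀ ^ 2)
          = D ^ 2 * I ^ 2 * C₀ ^ 2 + (L * C₀ ^ 2 / 4) * (L * I ^ 2) := by ring
      have hr3 : L * (S₀ ^ 2 + (2 / s3 * S₀) * C₀ ^ 2)
          = S₀ ^ 2 * L + (L * C₀ ^ 2 / 4) * (2 / s3 * S₀) + (3/4) * (L * C₀ ^ 2 * (2 / s3 * S₀)) := by
        ring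
      linarith [hk1, he2, hk2, hk3, hr1, hr2, hr3]
    exact le_of_mul_le_mul_left (by linarith [hgoal]) hL0
  have hMI2 : M * I ^ 2 ≤ 2 / s3 * S₀ + S₀ ^ 2 / C₀ ^ 2 := by
    rw [← mul_le_mul_iff_of_pos_right hC2pos]
    have : (2 / s3 * S₀ + S₀ ^ 2 / C₀ ^ 2) * C₀ ^ 2
        = S₀ ^ 2 + (2 / s3 * S₀) * C₀ ^ 2 := by
      field_simp
      ring
    rw [this]
    calc M * I ^ 2 * C₀ ^ 2 = M * (I ^ 2 * C₀ ^ 2) := by ring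
      _ ≤ S₀ ^ 2 + (2 / s3 * S₀) * C₀ ^ 2 := hMIC
  have hY2 : (sM * I) ^ 2 ≤ 2 / s3 * S₀ + S₀ ^ 2 / C₀ ^ 2 := by
    rw [mul_pow, hsM2]
    exact hMI2
  have hYle : sM * I ≤ Real.sqrt (2 / s3 * S₀ + S₀ ^ 2 / C₀ ^ 2) := by
    have hY0 : 0 ≤ sM * I := mul_nonneg hsM0 hI0
    have := Real.sqrt_le_sqrt hY2
    rwa [Real.sqrt_sq hY0] at this
  have hden : s3 / 2 * C₀ ^ 2 ≤ S₀ := by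
    have h9 : s3 / 2 * (2 / s3 * S₀) = S₀ := by
      field_simp
    calc s3 / 2 * C₀ ^ 2 ≤ s3 / 2 * (2 / s3 * S₀) :=
        mul_le_mul_of_nonneg_left hC0sq (by positivity)
      _ = S₀ := h9
  have hbound₂ : sM * I ≤ S₀ * Real.sqrt (2 / s3 * S₀ + S₀ ^ 2 / C₀ ^ 2) /
      (s3 / 2 * C₀ ^ 2) := by
    refine hYle.trans ?_
    rw [le_div_iff₀ (by positivity)]
    calc Real.sqrt (2 / s3 * S₀ + S₀ ^ 2 / C₀ ^ 2) * (s3 / 2 * C₀ ^ 2)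
        ≤ Real.sqrt (2 / s3 * S₀ + S₀ ^ 2 / C₀ ^ 2) * S₀ :=
          mul_le_mul_of_nonneg_left hden (Real.sqrt_nonneg _)
      _ = S₀ * Real.sqrt (2 / s3 * S₀ + S₀ ^ 2 / C₀ ^ 2) := mul_comm _ _
  -- conclusion
  refine ⟨c₁, c₂, q₁.1, q₁.2, q₂.1, q₂.2, hloop₁, hloop₂, hne₁, hne₂, ?_, ?_, ?_⟩
  · rw [hdetI]; norm_num
  · exact le_trans (hlen₁.trans hbound₁) (le_max_left _ _)
  · exact le_trans (hlen₂.trans hbound₂) (le_max_right _ _)
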